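/- Let a>0, D>0, μ>0 and r>a. Then ∫_0^∞ κ(τ,r) e^{−μτ} dτ = (a/r)·exp(−√(μ/D)(r−a)). Equivalently, the channel impulse response h_t(r) = ∫_0^t κ(τ,r)e^{−μτ}dτ tends to (a/r)·exp(−√(μ/D)(r−a)) as t → ∞. -/
import Mathlib


open MeasureTheory Real Set Filter
open Topology

/-- Hitting rate at the surface of a fully absorbing spherical receiver of radius `a`. -/
noncomputable def kappa (a D τ r : ℝ) : ℝ :=
  (a / r) * ((r - a) / Real.sqrt (4 * Real.pi * D * τ ^ 3)) *
    Real.exp (-(r - a) ^ 2 / (4 * D * τ))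

/-- Channel impulse response `h_t(r)` with molecular degradation rate `μ`. -/
noncomputable def cir (a D μ t r : ℝ) : ℝ :=
  ∫ τ in Set.Ioc (0 : ℝ) t, kappa a D τ r * Real.exp (-(μ * τ))

/-- Infinite-horizon channel impulse response:
`∫_0^∞ κ(τ,r)e^{−μτ}dτ = (a/r)·e^{−√(μ/D)(r−a)}`, equivalently `h_t(r)` converges to
this value as `t → ∞`. -/

noncomputable def erfInt (x : ℝ) : ℝ := ∫ t in (0:ℝ)..x, Real.exp (-t ^ 2)

lemma erfInt_hasDerivAt (x : ℝ) : HasDerivAt erfInt (Real.exp (-x ^ 2)) x := by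
  have hc : Continuous fun t : ℝ => Real.exp (-t ^ 2) := by continuity
  exact (hc.integral_hasStrictDerivAt 0 x).hasDerivAt

lemma integrable_exp_neg_sq' : Integrable (fun t : ℝ => Real.exp (-t ^ 2)) := by
  simpa using integrable_exp_neg_mul_sq (one_pos)

lemma erfInt_tendsto_atTop : Tendsto erfInt atTop (𝓝 (Real.sqrt Real.pi / 2)) := by
  have h := MeasureTheory.intervalIntegral_tendsto_integral_Ioi 0
    (integrable_exp_neg_sq'.integrableOn) (tendsto_id (α := ℝ))
  have h2 : ∫ t in Ioi (0:ℝ), Real.exp (-t ^ 2) = Real.sqrt Real.pi / 2 := by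
    simpa using integral_gaussian_Ioi 1
  rw [h2] at h
  exact h

lemma erfInt_neg (x : ℝ) : erfInt (-x) = - erfInt x := by
  have h := intervalIntegral.integral_comp_neg (a := (0:ℝ)) (b := x) fun t => Real.exp (-t ^ 2)
  simp only [neg_neg, neg_zero, neg_sq] at h
  rw [intervalIntegral.integral_symm 0 (-x)] at h
  show (∫ t in (0:ℝ)..(-x), Real.exp (-t ^ 2)) = -∫ t in (0:ℝ)..x, Real.exp (-t ^ 2)
  linarith [h]

lemma erfInt_tendsto_atBot : Tendsto erfInt atBot (𝓝 (-(Real.sqrt Real.pi / 2))) := by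
  have h : erfInt = fun x => - erfInt (-x) := by
    funext x; rw [erfInt_neg, neg_neg]
  rw [h]
  exact (erfInt_tendsto_atTop.comp tendsto_neg_atBot_atTop).neg

lemma sqrt_tendsto_atTop' : Tendsto Real.sqrt atTop atTop := by
  apply tendsto_atTop_atTop_of_monotone (fun x y h => Real.sqrt_le_sqrt h)
  intro b
  exact ⟨b ^ 2, by rw [Real.sqrt_sq_eq_abs]; exact le_abs_self b⟩

lemma sqrt_tendsto_zero_within : Tendsto Real.sqrt (𝓝[>] (0:ℝ)) (𝓝[>] (0:ℝ)) := by
  rw [tendsto_nhdsWithin_iff]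
  constructor
  · have h := (Real.continuous_sqrt.tendsto 0).mono_left (nhdsWithin_le_nhds (s := Ioi (0:ℝ)))
    simpa using h
  · filter_upwards [self_mem_nhdsWithin] with x hx
    exact Real.sqrt_pos.mpr hx

set_option maxHeartbeats 1000000 in
theorem cir_infinite_horizon (a D μ r : ℝ)
    (ha : 0 < a) (hD : 0 < D) (hμ : 0 < μ) (hr : a < r) :
    (∫ τ in Set.Ioi (0 : ℝ), kappa a D τ r * Real.exp (-(μ * τ)) =
      (a / r) * Real.exp (-(Real.sqrt (μ / D) * (r - a)))) ∧
    Filter.Tendsto (fun t => cir a D μ t r) Filter.atTop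
      (nhds ((a / r) * Real.exp (-(Real.sqrt (μ / D) * (r - a))))) := by
  have hr0 : (0:ℝ) < r := lt_trans ha hr
  have hc : 0 < r - a := by linarith
  set c : ℝ := r - a with hc_def
  have hsD : (0:ℝ) < Real.sqrt D := Real.sqrt_pos.mpr hD
  have hsμ : (0:ℝ) < Real.sqrt μ := Real.sqrt_pos.mpr hμ
  have hsπ : (0:ℝ) < Real.sqrt Real.pi := Real.sqrt_pos.mpr Real.pi_pos
  set sD := Real.sqrt D with hsD_def
  set sμ := Real.sqrt μ with hsμ_def
  set sπ := Real.sqrt Real.pi with hsπ_def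
  have hD2 : sD ^ 2 = D := Real.sq_sqrt hD.le
  have hμ2 : sμ ^ 2 = μ := Real.sq_sqrt hμ.le
  have hπ2 : sπ ^ 2 = Real.pi := Real.sq_sqrt Real.pi_pos.le
  have hγ : Real.sqrt (μ / D) = sμ / sD := Real.sqrt_div hμ.le D
  set U : ℝ → ℝ := fun τ => c / (2 * sD) * (Real.sqrt τ)⁻¹ - sμ * Real.sqrt τ with hU_def
  set V : ℝ → ℝ := fun τ => c / (2 * sD) * (Real.sqrt τ)⁻¹ + sμ * Real.sqrt τ with hV_def
  set e₁ := Real.exp (-(sμ / sD * c)) with he1_def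
  set e₂ := Real.exp (sμ / sD * c) with he2_def
  set K := -(a / r) / sπ with hK_def
  set f : ℝ → ℝ := fun τ => kappa a D τ r * Real.exp (-(μ * τ)) with hf_def
  set G : ℝ → ℝ := fun τ => K * (e₁ * erfInt (U τ) + e₂ * erfInt (V τ)) with hG_def
  set L0 := K * ((e₁ + e₂) * (sπ / 2)) with hL0_def
  set Ltop := K * ((e₂ - e₁) * (sπ / 2)) with hLtop_def
  set G₀ : ℝ → ℝ := fun τ => if τ ≤ 0 then L0 else G τ with hG0_def
  have hG00 : G₀ 0 = L0 := by simp [hG0_def]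
  -- derivative of G
  have hderiv : ∀ τ ∈ Ioi (0:ℝ), HasDerivAt G (f τ) τ := by
    intro τ hτmem
    have hτ : 0 < τ := hτmem
    have hsτ : (0:ℝ) < Real.sqrt τ := Real.sqrt_pos.mpr hτ
    have hτ2 : Real.sqrt τ ^ 2 = τ := Real.sq_sqrt hτ.le
    set sτ := Real.sqrt τ with hsτ_def
    have hroot : HasDerivAt Real.sqrt (1 / (2 * sτ)) τ := Real.hasDerivAt_sqrt (ne_of_gt hτ)
    have hinv : HasDerivAt (fun t : ℝ => (Real.sqrt t)⁻¹) (-(1 / (2 * sτ)) / sτ ^ 2) τ :=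
      hroot.inv (ne_of_gt hsτ)
    have hU' : HasDerivAt U (c / (2 * sD) * (-(1 / (2 * sτ)) / sτ ^ 2) - sμ * (1 / (2 * sτ))) τ :=
      (hinv.const_mul (c / (2 * sD))).sub (hroot.const_mul sμ)
    have hV' : HasDerivAt V (c / (2 * sD) * (-(1 / (2 * sτ)) / sτ ^ 2) + sμ * (1 / (2 * sτ))) τ :=
      (hinv.const_mul (c / (2 * sD))).add (hroot.const_mul sμ)
    have hGU : HasDerivAt (fun t => erfInt (U t))
        (Real.exp (-(U τ) ^ 2) * (c / (2 * sD) * (-(1 / (2 * sτ)) / sτ ^ 2) - sμ * (1 / (2 * sτ)))) τ :=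
      (erfInt_hasDerivAt (U τ)).comp τ hU'
    have hGV : HasDerivAt (fun t => erfInt (V t))
        (Real.exp (-(V τ) ^ 2) * (c / (2 * sD) * (-(1 / (2 * sτ)) / sτ ^ 2) + sμ * (1 / (2 * sτ)))) τ :=
      (erfInt_hasDerivAt (V τ)).comp τ hV'
    have hG' : HasDerivAt G
        (K * (e₁ * (Real.exp (-(U τ) ^ 2) * (c / (2 * sD) * (-(1 / (2 * sτ)) / sτ ^ 2) - sμ * (1 / (2 * sτ)))) +
             e₂ * (Real.exp (-(V τ) ^ 2) * (c / (2 * sD) * (-(1 / (2 * sτ)) / sτ ^ 2) + sμ * (1 / (2 * sτ)))))) τ :=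
      ((hGU.const_mul e₁).add (hGV.const_mul e₂)).const_mul K
    -- algebra
    have hsqrt4 : Real.sqrt (4 * Real.pi * D * τ ^ 3) = 2 * sπ * sD * (τ * sτ) := by
      rw [show (4 * Real.pi * D * τ ^ 3 : ℝ) = (2 * sπ * sD * (τ * sτ)) ^ 2 by
        linear_combination (-(4 * τ^2 * sD^2 * sτ^2)) * hπ2 - (4 * τ^2 * Real.pi * sτ^2) * hD2
          - (4 * Real.pi * D * τ^2) * hτ2]
      exact Real.sqrt_sq (by positivity)
    have hEU : e₁ * Real.exp (-(U τ) ^ 2) =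
        Real.exp (-c ^ 2 / (4 * D * τ)) * Real.exp (-(μ * τ)) := by
      rw [he1_def, ← Real.exp_add, ← Real.exp_add]
      congr 1
      simp only [hU_def]
      rw [← hsτ_def, ← hτ2, ← hD2, ← hμ2]
      field_simp
      ring
    have hEV : e₂ * Real.exp (-(V τ) ^ 2) =
        Real.exp (-c ^ 2 / (4 * D * τ)) * Real.exp (-(μ * τ)) := by
      rw [he2_def, ← Real.exp_add, ← Real.exp_add]
      congr 1
      simp only [hV_def]
      rw [← hsτ_def, ← hτ2, ← hD2, ← hμ2]
      field_simp
      ring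
    have halg : kappa a D τ r * Real.exp (-(μ * τ)) =
        K * (e₁ * (Real.exp (-(U τ) ^ 2) * (c / (2 * sD) * (-(1 / (2 * sτ)) / sτ ^ 2) - sμ * (1 / (2 * sτ)))) +
             e₂ * (Real.exp (-(V τ) ^ 2) * (c / (2 * sD) * (-(1 / (2 * sτ)) / sτ ^ 2) + sμ * (1 / (2 * sτ))))) := by
      have hrw : K * (e₁ * (Real.exp (-(U τ) ^ 2) * (c / (2 * sD) * (-(1 / (2 * sτ)) / sτ ^ 2) - sμ * (1 / (2 * sτ)))) +
             e₂ * (Real.exp (-(V τ) ^ 2) * (c / (2 * sD) * (-(1 / (2 * sτ)) / sτ ^ 2) + sμ * (1 / (2 * sτ))))) =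
          (e₁ * Real.exp (-(U τ) ^ 2)) * (K * (c / (2 * sD) * (-(1 / (2 * sτ)) / sτ ^ 2) - sμ * (1 / (2 * sτ)))) +
          (e₂ * Real.exp (-(V τ) ^ 2)) * (K * (c / (2 * sD) * (-(1 / (2 * sτ)) / sτ ^ 2) + sμ * (1 / (2 * sτ)))) := by
        ring
      rw [hrw, hEU, hEV]
      simp only [kappa]
      rw [hsqrt4, hK_def, ← hc_def, ← hτ2]
      field_simp
      ring
    show HasDerivAt G (kappa a D τ r * Real.exp (-(μ * τ))) τ
    rw [halg]
    exact hG'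
  -- limits at infinity
  have hconst0 : Tendsto (fun τ : ℝ => c / (2 * sD) * (Real.sqrt τ)⁻¹) atTop (𝓝 0) := by
    have := (sqrt_tendsto_atTop'.inv_tendsto_atTop).const_mul (c / (2 * sD))
    simpa using this
  have hUbot : Tendsto U atTop atBot := by
    have h2 : Tendsto (fun τ : ℝ => -(sμ * Real.sqrt τ)) atTop atBot :=
      tendsto_neg_atTop_atBot.comp (sqrt_tendsto_atTop'.const_mul_atTop hsμ)
    have h3 : Tendsto (fun τ : ℝ => c / (2 * sD) * (Real.sqrt τ)⁻¹ + -(sμ * Real.sqrt τ)) atTop atBot :=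
      hconst0.add_atBot h2
    refine h3.congr (fun τ => ?_)
    simp only [hU_def]; ring
  have hVtop : Tendsto V atTop atTop :=
    hconst0.add_atTop (sqrt_tendsto_atTop'.const_mul_atTop hsμ)
  have hGtop : Tendsto G atTop (𝓝 Ltop) := by
    have h := (((erfInt_tendsto_atBot.comp hUbot).const_mul e₁).add
      ((erfInt_tendsto_atTop.comp hVtop).const_mul e₂)).const_mul K
    have hval : Ltop = K * (e₁ * (-(sπ / 2)) + e₂ * (sπ / 2)) := by rw [hLtop_def]; ring
    rw [hG_def, hval]
    exact h
  have hGeq : G =ᶠ[atTop] G₀ := by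
    filter_upwards [Ioi_mem_atTop (0:ℝ)] with τ hτ
    simp [hG0_def, not_le.mpr (mem_Ioi.mp hτ)]
  have hG0top : Tendsto G₀ atTop (𝓝 Ltop) := hGtop.congr' hGeq
  -- limits at zero
  have hU0 : Tendsto U (𝓝[>] (0:ℝ)) atTop := by
    have h1 : Tendsto (fun τ : ℝ => (Real.sqrt τ)⁻¹) (𝓝[>] (0:ℝ)) atTop :=
      tendsto_inv_nhdsGT_zero.comp sqrt_tendsto_zero_within
    have h2 : Tendsto (fun τ : ℝ => c / (2 * sD) * (Real.sqrt τ)⁻¹) (𝓝[>] (0:ℝ)) atTop :=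
      h1.const_mul_atTop (by positivity)
    have h3 : Tendsto (fun τ : ℝ => -(sμ * Real.sqrt τ)) (𝓝[>] (0:ℝ)) (𝓝 0) := by
      have := (((sqrt_tendsto_zero_within.mono_right nhdsWithin_le_nhds)).const_mul sμ).neg
      simpa using this
    have h4 := h2.atTop_add h3
    refine h4.congr (fun τ => ?_)
    simp only [hU_def]; ring
  have hV0 : Tendsto V (𝓝[>] (0:ℝ)) atTop := by
    have h1 : Tendsto (fun τ : ℝ => (Real.sqrt τ)⁻¹) (𝓝[>] (0:ℝ)) atTop :=
      tendsto_inv_nhdsGT_zero.comp sqrt_tendsto_zero_within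
    have h2 : Tendsto (fun τ : ℝ => c / (2 * sD) * (Real.sqrt τ)⁻¹) (𝓝[>] (0:ℝ)) atTop :=
      h1.const_mul_atTop (by positivity)
    have h3 : Tendsto (fun τ : ℝ => sμ * Real.sqrt τ) (𝓝[>] (0:ℝ)) (𝓝 0) := by
      have := ((sqrt_tendsto_zero_within.mono_right nhdsWithin_le_nhds)).const_mul sμ
      simpa using this
    exact h2.atTop_add h3
  have hG0zero : Tendsto G₀ (𝓝[>] (0:ℝ)) (𝓝 L0) := by
    have h := (((erfInt_tendsto_atTop.comp hU0).const_mul e₁).add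
      ((erfInt_tendsto_atTop.comp hV0).const_mul e₂)).const_mul K
    have hval : L0 = K * (e₁ * (sπ / 2) + e₂ * (sπ / 2)) := by rw [hL0_def]; ring
    have hG' : Tendsto G (𝓝[>] (0:ℝ)) (𝓝 L0) := by
      rw [hG_def, hval]; exact h
    refine hG'.congr' ?_
    filter_upwards [self_mem_nhdsWithin] with τ hτ
    simp [hG0_def, not_le.mpr (mem_Ioi.mp hτ)]
  have hcont : ContinuousWithinAt G₀ (Ici (0:ℝ)) 0 := by
    rw [← Set.Ioi_insert]
    apply ContinuousWithinAt.insert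
    rw [ContinuousWithinAt, hG00]
    exact hG0zero
  -- nonnegativity
  have hpos : ∀ τ ∈ Ioi (0:ℝ), 0 ≤ f τ := by
    intro τ hτ
    have hτ' : (0:ℝ) < τ := hτ
    show 0 ≤ kappa a D τ r * Real.exp (-(μ * τ))
    apply mul_nonneg _ (Real.exp_pos _).le
    unfold kappa
    apply mul_nonneg _ (Real.exp_pos _).le
    apply mul_nonneg (by positivity)
    exact div_nonneg (by linarith) (Real.sqrt_nonneg _)
  -- derivative of G₀
  have hderiv0 : ∀ τ ∈ Ioi (0:ℝ), HasDerivAt G₀ (f τ) τ := by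
    intro τ hτ
    refine (hderiv τ hτ).congr_of_eventuallyEq ?_
    filter_upwards [Ioi_mem_nhds (mem_Ioi.mp hτ)] with x hx
    simp [hG0_def, not_le.mpr (mem_Ioi.mp hx)]
  have hInt : IntegrableOn f (Ioi (0:ℝ)) :=
    integrableOn_Ioi_deriv_of_nonneg hcont hderiv0 hpos hG0top
  have hIoi : ∫ τ in Ioi (0:ℝ), f τ = Ltop - G₀ 0 :=
    integral_Ioi_of_hasDerivAt_of_nonneg hcont hderiv0 hpos hG0top
  have hvalue : Ltop - G₀ 0 = (a / r) * Real.exp (-(Real.sqrt (μ / D) * c)) := by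
    rw [hG00, hLtop_def, hL0_def, hγ, hK_def, ← he1_def]
    field_simp
    ring
  constructor
  · show ∫ τ in Ioi (0:ℝ), f τ = (a / r) * Real.exp (-(Real.sqrt (μ / D) * c))
    rw [hIoi, hvalue]
  · have h2 : Tendsto (fun t => ∫ τ in (0:ℝ)..t, f τ) atTop (𝓝 (∫ τ in Ioi (0:ℝ), f τ)) :=
      intervalIntegral_tendsto_integral_Ioi 0 hInt tendsto_id
    rw [hIoi, hvalue] at h2
    refine h2.congr' ?_
    filter_upwards [Ici_mem_atTop (0:ℝ)] with t ht
    rw [intervalIntegral.integral_of_le (mem_Ici.mp ht)]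
    unfold cir
    rfl
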